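/- There is an absolute constant C > 0 with the following property. Let M1 and M2 be distinct primes and let q1, q2, r be positive integers with gcd(q2, q1·M1·M2) = 1, gcd(q1·r, M1·M2) = 1, and gcd(q2, n1·r) = 1, where n1 is a positive integer dividing q1·r. Let m, m' be integers and let ε, δ ∈ {+1, −1}. Define 𝒞2(0) = (n1/(q2²·q1·r)) · Σ_{v (mod q2²·q1·r/n1)} 𝔅(n1, ε·v, δ·m; q1·q2) · conj(𝔅(n1, ε·v, δ·m'; q1·q2)). Then |𝒞2(0)| ≤ C · q1·q2·r · Σ_{d | q1·q2} Σ_{d' | q1·q2, gcd(d, d') | (m − m')} gcd(d, d'). -/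

import Mathlib

open Finset

/-- `eR x = exp(2πi·x)`. -/
noncomputable def eR (x : ℝ) : ℂ := Complex.exp (2 * Real.pi * Complex.I * x)

/-- `eZMod c x = e(x/c)` for a residue `x` mod `c`. -/
noncomputable def eZMod (c : ℕ) (x : ZMod c) : ℂ := eR ((x.val : ℝ) / c)

/-- Kloosterman sum `S(a, b; c)`. -/
noncomputable def kloos (a b : ℤ) (c : ℕ) : ℂ :=
  ∑ d ∈ (Finset.range c).filter (fun d => Nat.Coprime d c),
    eZMod c ((a : ZMod c) * (d : ZMod c) + (b : ZMod c) * ((d : ZMod c))⁻¹)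

/-- Normalized Kloosterman sum `Kl2(n; p)`. -/
noncomputable def Kl2 (p : ℕ) (n : ZMod p) : ℂ :=
  ((1 / Real.sqrt p : ℝ) : ℂ) *
    ∑ x1 ∈ Finset.range p, ∑ x2 ∈ Finset.range p,
      if (x1 : ZMod p) * (x2 : ZMod p) = n then eR (((x1 : ℝ) + (x2 : ℝ)) / p) else 0

/-- Gauss sum `τ(χ)` of a Dirichlet character mod `q`. -/
noncomputable def gauss (q : ℕ) (χ : DirichletCharacter ℂ q) : ℂ :=
  ∑ a ∈ Finset.range q, χ (a : ZMod q) * eZMod q (a : ZMod q)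

/-- The sum `L_{α,β}(v; p)` attached to a Dirichlet character mod `p`. -/
noncomputable def Lab (p : ℕ) (χ : DirichletCharacter ℂ p) (α β v : ZMod p) : ℂ :=
  ((1 / Real.sqrt p : ℝ) : ℂ) *
    ∑ b ∈ Finset.range p,
      if Nat.Coprime (((b : ZMod p) + β * v).val) p
      then (starRingEnd ℂ) (χ (b : ZMod p)) * eZMod p (α * ((b : ZMod p) + β * v)⁻¹)
      else 0

/-- The character sum `𝔅(n1, n2, m; q)` (with parameters `r, M1, M2`). -/
noncomputable def frakB (r M1 M2 n1 : ℕ) (n2 m : ℤ) (q : ℕ) : ℂ :=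
  ∑ d ∈ q.divisors, (d : ℂ) * ((ArithmeticFunction.moebius (q / d) : ℤ) : ℂ) *
    ∑ u ∈ (Finset.range (q * r / n1)).filter (fun u => Nat.Coprime u (q * r / n1)),
      if (m : ZMod d) = ((M2 ^ 2 * n1 * u : ℕ) : ZMod d)
      then eZMod (q * r / n1)
        ((n2 : ZMod (q * r / n1)) * ((M1 : ZMod (q * r / n1)) * (u : ZMod (q * r / n1)))⁻¹)
      else 0

/-- The character sum `𝔇(n1, n2, m, q; M1)` (with parameters `r, M2, χ1`). -/
noncomputable def frakD (M1 M2 q r n1 : ℕ) (χ1 : DirichletCharacter ℂ M1) (n2 m : ℤ) : ℂ :=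
  ∑ a ∈ (Finset.range M1).filter (fun a => Nat.Coprime a M1),
    Lab M1 χ1 ((m : ZMod M1) * ((q : ZMod M1) * (M2 : ZMod M1))⁻¹) (M2 : ZMod M1) (a : ZMod M1) *
    Kl2 M1 (-(r : ZMod M1) * (n2 : ZMod M1) *
      ((a : ZMod M1) * (((q * r / n1 : ℕ)) : ZMod M1) ^ 2)⁻¹)

lemma eR_add (x y : ℝ) : eR (x + y) = eR x * eR y := by
  simp [eR, ← Complex.exp_add]; ring_nf

lemma eR_intCast (k : ℤ) : eR k = 1 := by
  rw [eR, show (2 * Real.pi * Complex.I : ℂ) * (k:ℝ) = (k:ℤ) * (2 * Real.pi * Complex.I) by push_cast; ring]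
  exact_mod_cast Complex.exp_int_mul_two_pi_mul_I k

lemma eR_sub_int (x : ℝ) (k : ℤ) : eR (x - k) = eR x := by
  rw [show x - k = x + (-k : ℤ) by push_cast; ring, eR_add, eR_intCast, mul_one]

lemma eZMod_add {c : ℕ} (hc : 0 < c) (x y : ZMod c) :
    eZMod c (x + y) = eZMod c x * eZMod c y := by
  haveI : NeZero c := ⟨hc.ne'⟩
  rw [eZMod, eZMod, eZMod, ← eR_add]
  set k : ℕ := (x.val + y.val) / c with hk
  have h := ZMod.val_add x y
  have hle : c * k ≤ x.val + y.val := Nat.mul_div_le _ _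
  have h2 : ((x+y).val : ℝ) = (x.val + y.val : ℝ) - c * k := by
    rw [h, Nat.mod_def, ← hk, Nat.cast_sub hle]; push_cast; ring
  have hc' : (c:ℝ) ≠ 0 := Nat.cast_ne_zero.mpr hc.ne'
  have h3 : ((x.val:ℝ) + y.val - c * k)/c = ((x.val:ℝ)/c + (y.val:ℝ)/c) - (k : ℤ) := by
    field_simp
    norm_cast
  rw [h2, h3, eR_sub_int]

lemma eZMod_zero (c : ℕ) : eZMod c 0 = 1 := by
  simp [eZMod, ZMod.val_zero, eR]

lemma eZMod_neg {c : ℕ} (hc : 0 < c) (x : ZMod c) :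
    eZMod c (-x) = (eZMod c x)⁻¹ := by
  have h := eZMod_add hc x (-x)
  rw [add_neg_cancel, eZMod_zero] at h
  exact eq_inv_of_mul_eq_one_left (by rw [mul_comm]; exact h.symm)

lemma eZMod_abs (c : ℕ) (x : ZMod c) : ‖eZMod c x‖ = 1 := by
  rw [eZMod, eR]
  set rr : ℝ := (x.val:ℝ)/c
  rw [show 2 * (Real.pi:ℂ) * Complex.I * (rr:ℂ) = ((2 * Real.pi * rr : ℝ) : ℂ) * Complex.I by
    push_cast; ring]
  exact Complex.norm_exp_ofReal_mul_I _

lemma conj_eZMod {c : ℕ} (hc : 0 < c) (x : ZMod c) :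
    (starRingEnd ℂ) (eZMod c x) = eZMod c (-x) := by
  rw [eZMod_neg hc, Complex.inv_def, Complex.normSq_eq_norm_sq, eZMod_abs]
  simp

lemma eZMod_eq_one_iff {c : ℕ} (hc : 0 < c) (x : ZMod c) :
    eZMod c x = 1 ↔ x = 0 := by
  haveI : NeZero c := ⟨hc.ne'⟩
  set t : ℕ := x.val with ht
  constructor
  · intro h
    rw [eZMod, eR, Complex.exp_eq_one_iff, ← ht] at h
    obtain ⟨n, hn⟩ := h
    have hI : (2 * Real.pi * Complex.I) ≠ 0 := by
      simp [Real.pi_ne_zero, Complex.I_ne_zero]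
    have h2 : (((t:ℝ)/c : ℝ) : ℂ) = (n : ℂ) := by
      rw [show ((n:ℂ) * (2 * Real.pi * Complex.I)) = (2 * Real.pi * Complex.I) * n by ring] at hn
      exact mul_left_cancel₀ hI hn
    have h3 : ((t : ℝ)/c) = (n : ℝ) := by exact_mod_cast h2
    have hc' : (0:ℝ) < c := Nat.cast_pos.mpr hc
    have h4 : (0:ℝ) ≤ (n:ℝ) := by rw [← h3]; positivity
    have h5 : (n:ℝ) < 1 := by
      rw [← h3, div_lt_one hc']
      exact_mod_cast ht ▸ ZMod.val_lt x
    have : n = 0 := by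
      have h6 : (0:ℤ) ≤ n := by exact_mod_cast h4
      have h7 : n < 1 := by exact_mod_cast h5
      omega
    subst this
    have hc' : (c:ℝ) ≠ 0 := ne_of_gt hc'
    have h8 : (t : ℝ) = 0 := by
      have := h3
      rw [div_eq_iff hc'] at this
      simpa using this
    have h9 : x.val = 0 := by
      have : t = 0 := by exact_mod_cast h8
      omega
    exact (ZMod.val_eq_zero x).mp h9
  · rintro rfl; exact eZMod_zero c

lemma sum_univ_eZMod {c : ℕ} [NeZero c] (hc : 0 < c) (w : ZMod c) :
    ∑ x : ZMod c, eZMod c (x * w) = if w = 0 then (c:ℂ) else 0 := by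
  by_cases hw : w = 0
  · simp [hw, eZMod_zero, Finset.card_univ, ZMod.card]
  · rw [if_neg hw]
    have key : eZMod c w * ∑ x : ZMod c, eZMod c (x * w) = ∑ x : ZMod c, eZMod c (x * w) := by
      rw [Finset.mul_sum]
      refine Finset.sum_nbij' (fun x => x + 1) (fun x => x - 1) ?_ ?_ ?_ ?_ ?_
      · intros; exact Finset.mem_univ _
      · intros; exact Finset.mem_univ _
      · intros; ring
      · intros; ring
      · intro x _
        rw [← eZMod_add hc]
        congr 1
        ring
    have h2 : (eZMod c w - 1) * ∑ x : ZMod c, eZMod c (x * w) = 0 := by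
      rw [sub_mul, one_mul, key, sub_self]
    rcases mul_eq_zero.mp h2 with h | h
    · exfalso
      exact hw ((eZMod_eq_one_iff hc w).mp (by linear_combination h))
    · exact h

lemma sum_range_eZMod {c : ℕ} (hc : 0 < c) (w : ZMod c) :
    ∑ v ∈ Finset.range c, eZMod c ((v:ZMod c) * w) = if w = 0 then (c:ℂ) else 0 := by
  haveI : NeZero c := ⟨hc.ne'⟩
  rw [← sum_univ_eZMod hc w]
  refine Finset.sum_nbij' (fun v => (v : ZMod c)) (fun x => x.val) ?_ ?_ ?_ ?_ ?_
  · intros; exact Finset.mem_univ _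
  · intro x _; exact Finset.mem_range.mpr (ZMod.val_lt x)
  · intro v hv; exact ZMod.val_cast_of_lt (Finset.mem_range.mp hv)
  · intro x _; exact ZMod.natCast_rightInverse x
  · intros; rfl

lemma sum_range_mul_eZMod {c : ℕ} (hc : 0 < c) (k : ℕ) (w : ZMod c) :
    ∑ v ∈ Finset.range (k * c), eZMod c ((v:ZMod c) * w)
      = k * (if w = 0 then (c:ℂ) else 0) := by
  induction k with
  | zero => simp
  | succ k ih =>
    rw [Nat.succ_mul, Finset.sum_range_add, ih]
    have : ∀ i ∈ Finset.range c, eZMod c (((k*c+i : ℕ):ZMod c) * w) = eZMod c ((i:ZMod c)*w) := by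
      intro i _
      congr 2
      push_cast
      simp [ZMod.natCast_self]
    rw [Finset.sum_congr rfl this, sum_range_eZMod hc w]
    push_cast
    ring

lemma card_le_of_dvd_diff {N L : ℕ} (hL : 0 < L) (s : Finset ℕ) (hs : s ⊆ Finset.range N)
    (h : ∀ u ∈ s, ∀ u' ∈ s, u ≤ u' → L ∣ u' - u) : s.card ≤ N / L + 1 := by
  have key : ∀ u ∈ s, ∀ u' ∈ s, u ≤ u' → u / L = u' / L → u = u' := by
    intro u hu u' hu' hle hdiv
    by_contra hne
    obtain ⟨k, hk⟩ := h u hu u' hu' hle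
    have hk0 : 0 < k := by
      rcases Nat.eq_zero_or_pos k with h0 | h0
      · subst h0; simp at hk; omega
      · exact h0
    have hLk : L ≤ L * k := Nat.le_mul_of_pos_right L hk0
    have hadd : u + L ≤ u' := by omega
    have h1 : u / L + 1 ≤ u' / L := by
      calc u / L + 1 = (u + L) / L := by rw [Nat.add_div_right _ hL]
        _ ≤ u' / L := Nat.div_le_div_right hadd
    omega
  calc s.card ≤ (Finset.range (N / L + 1)).card := by
        apply Finset.card_le_card_of_injOn (fun u => u / L)
        · intro u hu
          have hu2 := Finset.mem_range.mp (hs hu)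
          have : u / L ≤ N / L := Nat.div_le_div_right hu2.le
          exact Finset.mem_range.mpr (by show u / L < N / L + 1; omega)
        · intro u hu u' hu' hdiv
          rcases le_total u u' with hle | hle
          · exact key u hu u' hu' hle hdiv
          · exact (key u' hu' u hu hle hdiv.symm).symm
    _ = N / L + 1 := Finset.card_range _

lemma div_gcd_dvd_of_dvd_mul {d n t : ℕ} (hn : 0 < n) (h : d ∣ n * t) :
    d / Nat.gcd d n ∣ t := by
  set g := Nat.gcd d n with hg
  have hgpos : 0 < g := Nat.gcd_pos_of_pos_right d hn
  have hgd : g ∣ d := Nat.gcd_dvd_left d n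
  have hgn : g ∣ n := Nat.gcd_dvd_right d n
  obtain ⟨k, hk⟩ := h
  have heq : g * ((n / g) * t) = g * ((d / g) * k) := by
    rw [← Nat.mul_assoc, Nat.mul_div_cancel' hgn, ← Nat.mul_assoc, Nat.mul_div_cancel' hgd, hk]
  have heq2 : (n / g) * t = (d / g) * k := Nat.eq_of_mul_eq_mul_left hgpos heq
  have hdvd : d / g ∣ (n / g) * t := Dvd.intro k heq2.symm
  exact (Nat.coprime_div_gcd_div_gcd hgpos).dvd_of_dvd_mul_left hdvd

lemma pair_count_bound (q1 q2 r n1 d d' F : ℕ) (hq : 0 < q1 * q2)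
    (hr : 0 < r) (hn1 : 0 < n1) (hn1d : n1 ∣ q1 * q2 * r)
    (hd : d ∣ q1 * q2) (hd' : d' ∣ q1 * q2)
    (hF : F ≤ (q1 * q2 * r / n1) / Nat.lcm (d / Nat.gcd d n1) (d' / Nat.gcd d' n1) + 1) :
    d * d' * F ≤ 2 * (q1 * q2 * r) * Nat.gcd d d' := by
  set g := Nat.gcd d d'
  set L := Nat.lcm (d / Nat.gcd d n1) (d' / Nat.gcd d' n1) with hL
  set N := q1 * q2 * r / n1 with hN
  have hdL : d ∣ n1 * L := by
    have h1 : d ∣ n1 * (d / Nat.gcd d n1) := by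
      calc d = (d / Nat.gcd d n1) * Nat.gcd d n1 :=
            (Nat.div_mul_cancel (Nat.gcd_dvd_left d n1)).symm
        _ ∣ (d / Nat.gcd d n1) * n1 := Nat.mul_dvd_mul_left _ (Nat.gcd_dvd_right d n1)
        _ = n1 * (d / Nat.gcd d n1) := Nat.mul_comm _ _
    exact h1.trans (Nat.mul_dvd_mul_left n1 (Nat.dvd_lcm_left _ _))
  have hd'L : d' ∣ n1 * L := by
    have h1 : d' ∣ n1 * (d' / Nat.gcd d' n1) := by
      calc d' = (d' / Nat.gcd d' n1) * Nat.gcd d' n1 :=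
            (Nat.div_mul_cancel (Nat.gcd_dvd_left d' n1)).symm
        _ ∣ (d' / Nat.gcd d' n1) * n1 := Nat.mul_dvd_mul_left _ (Nat.gcd_dvd_right d' n1)
        _ = n1 * (d' / Nat.gcd d' n1) := Nat.mul_comm _ _
    exact h1.trans (Nat.mul_dvd_mul_left n1 (Nat.dvd_lcm_right _ _))
  have hLpos : 0 < L := Nat.lcm_pos
    (Nat.div_pos (Nat.le_of_dvd (Nat.pos_of_dvd_of_pos hd hq) (Nat.gcd_dvd_left d n1)) (Nat.gcd_pos_of_pos_right d hn1))
    (Nat.div_pos (Nat.le_of_dvd (Nat.pos_of_dvd_of_pos hd' hq) (Nat.gcd_dvd_left d' n1)) (Nat.gcd_pos_of_pos_right d' hn1))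
  have hlcm_dvd : Nat.lcm d d' ∣ n1 * L := Nat.lcm_dvd hdL hd'L
  have hlcm_le : Nat.lcm d d' ≤ n1 * L := Nat.le_of_dvd (Nat.mul_pos hn1 hLpos) hlcm_dvd
  have hlcm_le2 : Nat.lcm d d' ≤ q1 * q2 := Nat.le_of_dvd hq (Nat.lcm_dvd hd hd')
  have hdd' : d * d' = g * Nat.lcm d d' := (Nat.gcd_mul_lcm d d').symm
  have hNL : L * (N / L) ≤ N := Nat.mul_div_le N L
  have hn1N : n1 * N = q1 * q2 * r := Nat.mul_div_cancel' hn1d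
  calc d * d' * F = g * Nat.lcm d d' * F := by rw [hdd']
    _ ≤ g * Nat.lcm d d' * (N / L + 1) := Nat.mul_le_mul_left _ hF
    _ = g * (Nat.lcm d d' * (N / L)) + g * Nat.lcm d d' := by ring
    _ ≤ g * (n1 * L * (N / L)) + g * (q1 * q2) := by
        refine Nat.add_le_add (Nat.mul_le_mul_left _ (Nat.mul_le_mul_right _ hlcm_le)) (Nat.mul_le_mul_left _ hlcm_le2)
    _ ≤ g * (n1 * N) + g * (q1 * q2 * r) := by
        refine Nat.add_le_add (Nat.mul_le_mul_left _ ?_) (Nat.mul_le_mul_left _ (Nat.le_mul_of_pos_right _ hr))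
        rw [Nat.mul_assoc]
        exact Nat.mul_le_mul_left _ hNL
    _ = 2 * (q1 * q2 * r) * g := by rw [hn1N]; ring


lemma abs_moebius_le (n : ℕ) : |(ArithmeticFunction.moebius n : ℤ)| ≤ 1 := by
  by_cases h : Squarefree n
  · rw [ArithmeticFunction.moebius_apply_of_squarefree h]
    simp [abs_pow]
  · rw [ArithmeticFunction.moebius_eq_zero_of_not_squarefree h]; simp

lemma inv_inj_of_isUnit {n : ℕ} {x y : ZMod n} (hx : IsUnit x) (hy : IsUnit y)
    (h : x⁻¹ = y⁻¹) : x = y := by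
  calc x = x * (y⁻¹ * y) := by rw [ZMod.inv_mul_of_unit y hy, mul_one]
    _ = x * x⁻¹ * y := by rw [← h]; ring
    _ = y := by rw [ZMod.mul_inv_of_unit x hx, one_mul]

lemma key_orth {Nn : ℕ} (hN : 0 < Nn) (k : ℕ) (ε : ℤ) (hε : ε = 1 ∨ ε = -1) (x y : ZMod Nn) :
    ∑ v ∈ Finset.range (k * Nn),
      eZMod Nn (((ε * v : ℤ) : ZMod Nn) * x) *
        (starRingEnd ℂ) (eZMod Nn (((ε * v : ℤ) : ZMod Nn) * y))
    = if x = y then ((k * Nn : ℕ) : ℂ) else 0 := by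
  have hterm : ∀ v : ℕ, eZMod Nn (((ε * v : ℤ) : ZMod Nn) * x) *
      (starRingEnd ℂ) (eZMod Nn (((ε * v : ℤ) : ZMod Nn) * y))
      = eZMod Nn ((v : ZMod Nn) * ((ε : ZMod Nn) * (x - y))) := by
    intro v
    rw [conj_eZMod hN, ← eZMod_add hN]
    congr 1
    push_cast
    ring
  rw [Finset.sum_congr rfl (fun v _ => hterm v), sum_range_mul_eZMod hN k]
  have hiff : (ε : ZMod Nn) * (x - y) = 0 ↔ x = y := by
    rcases hε with rfl | rfl
    · push_cast; rw [one_mul, sub_eq_zero]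
    · push_cast; rw [neg_one_mul, neg_eq_zero, sub_eq_zero]
  by_cases hxy : x = y
  · rw [if_pos ((hiff.mpr hxy)), if_pos hxy]; push_cast; ring
  · rw [if_neg (fun hc => hxy (hiff.mp hc)), if_neg hxy, mul_zero]


lemma sum_mul_swap {α : Type*} (V : Finset ℕ) (P : Finset α) (A B : α → ℕ → ℂ) :
    ∑ v ∈ V, (∑ p ∈ P, A p v) * (∑ p' ∈ P, B p' v)
      = ∑ p ∈ P, ∑ p' ∈ P, ∑ v ∈ V, A p v * B p' v := by
  calc ∑ v ∈ V, (∑ p ∈ P, A p v) * (∑ p' ∈ P, B p' v)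
      = ∑ v ∈ V, ∑ p ∈ P, ∑ p' ∈ P, A p v * B p' v := by
        exact Finset.sum_congr rfl fun v _ => Finset.sum_mul_sum _ _ _ _
    _ = ∑ p ∈ P, ∑ v ∈ V, ∑ p' ∈ P, A p v * B p' v := Finset.sum_comm
    _ = ∑ p ∈ P, ∑ p' ∈ P, ∑ v ∈ V, A p v * B p' v :=
        Finset.sum_congr rfl fun p _ => Finset.sum_comm

lemma sum_identity {Nn : ℕ} (hNpos : 0 < Nn) (q2 : ℕ) (D U : Finset ℕ)
    (cc : ℕ → ℂ) (P1 P2 : ℕ → ℕ → Prop) [iP1 : ∀ d u, Decidable (P1 d u)]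
    [iP2 : ∀ d u, Decidable (P2 d u)] (a : ℕ → ZMod Nn)
    (ha : ∀ u ∈ U, ∀ u' ∈ U, a u = a u' ↔ u = u')
    (ε : ℤ) (hε : ε = 1 ∨ ε = -1) :
    ∑ v ∈ Finset.range (q2 * Nn),
      (∑ d ∈ D, cc d * ∑ u ∈ U,
        if P1 d u then eZMod Nn (((ε * v : ℤ) : ZMod Nn) * a u) else 0) *
      (starRingEnd ℂ) (∑ d ∈ D, cc d * ∑ u ∈ U,
        if P2 d u then eZMod Nn (((ε * v : ℤ) : ZMod Nn) * a u) else 0)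
    = ((q2 * Nn : ℕ) : ℂ) * ∑ d ∈ D, ∑ d' ∈ D, (cc d * (starRingEnd ℂ) (cc d')) *
        ((U.filter (fun u => P1 d u ∧ P2 d' u)).card : ℂ) := by
  have h1 : ∀ v : ℕ, (∑ d ∈ D, cc d * ∑ u ∈ U,
      if P1 d u then eZMod Nn (((ε * v : ℤ) : ZMod Nn) * a u) else 0)
      = ∑ p ∈ D ×ˢ U, cc p.1 *
          (if P1 p.1 p.2 then eZMod Nn (((ε * v : ℤ) : ZMod Nn) * a p.2) else 0) := by
    intro v
    rw [Finset.sum_product]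
    exact Finset.sum_congr rfl fun d _ => Finset.mul_sum _ _ _
  have h2 : ∀ v : ℕ, (starRingEnd ℂ) (∑ d ∈ D, cc d * ∑ u ∈ U,
      if P2 d u then eZMod Nn (((ε * v : ℤ) : ZMod Nn) * a u) else 0)
      = ∑ p ∈ D ×ˢ U, (starRingEnd ℂ) (cc p.1) *
          (if P2 p.1 p.2 then (starRingEnd ℂ) (eZMod Nn (((ε * v : ℤ) : ZMod Nn) * a p.2)) else 0) := by
    intro v
    rw [map_sum, Finset.sum_product]
    refine Finset.sum_congr rfl fun d _ => ?_
    rw [map_mul, map_sum, Finset.mul_sum]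
    refine Finset.sum_congr rfl fun u _ => ?_
    rw [apply_ite (starRingEnd ℂ), map_zero]
  have step1 : ∑ v ∈ Finset.range (q2 * Nn),
      (∑ d ∈ D, cc d * ∑ u ∈ U,
        if P1 d u then eZMod Nn (((ε * v : ℤ) : ZMod Nn) * a u) else 0) *
      (starRingEnd ℂ) (∑ d ∈ D, cc d * ∑ u ∈ U,
        if P2 d u then eZMod Nn (((ε * v : ℤ) : ZMod Nn) * a u) else 0)
      = ∑ p ∈ D ×ˢ U, ∑ p' ∈ D ×ˢ U, ∑ v ∈ Finset.range (q2 * Nn),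
          (cc p.1 * (if P1 p.1 p.2 then eZMod Nn (((ε * v : ℤ) : ZMod Nn) * a p.2) else 0)) *
          ((starRingEnd ℂ) (cc p'.1) *
            (if P2 p'.1 p'.2 then (starRingEnd ℂ) (eZMod Nn (((ε * v : ℤ) : ZMod Nn) * a p'.2)) else 0)) := by
    rw [← sum_mul_swap]
    exact Finset.sum_congr rfl fun v _ => by rw [h1 v, h2 v]
  rw [step1]
  have hinner : ∀ p ∈ D ×ˢ U, ∀ p' ∈ D ×ˢ U,
      ∑ v ∈ Finset.range (q2 * Nn),
        (cc p.1 * (if P1 p.1 p.2 then eZMod Nn (((ε * v : ℤ) : ZMod Nn) * a p.2) else 0)) *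
        ((starRingEnd ℂ) (cc p'.1) *
          (if P2 p'.1 p'.2 then (starRingEnd ℂ) (eZMod Nn (((ε * v : ℤ) : ZMod Nn) * a p'.2)) else 0))
      = (cc p.1 * (starRingEnd ℂ) (cc p'.1)) *
          (if P1 p.1 p.2 ∧ P2 p'.1 p'.2 ∧ p.2 = p'.2 then ((q2 * Nn : ℕ) : ℂ) else 0) := by
    intro p hp p' hp'
    have hpu : p.2 ∈ U := (Finset.mem_product.mp hp).2
    have hpu' : p'.2 ∈ U := (Finset.mem_product.mp hp').2
    by_cases hc1 : P1 p.1 p.2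
    · by_cases hc2 : P2 p'.1 p'.2
      · simp only [if_pos hc1, if_pos hc2, hc1, hc2, true_and]
        calc ∑ v ∈ Finset.range (q2 * Nn),
            (cc p.1 * eZMod Nn (((ε * v : ℤ) : ZMod Nn) * a p.2)) *
            ((starRingEnd ℂ) (cc p'.1) * (starRingEnd ℂ) (eZMod Nn (((ε * v : ℤ) : ZMod Nn) * a p'.2)))
            = (cc p.1 * (starRingEnd ℂ) (cc p'.1)) *
              ∑ v ∈ Finset.range (q2 * Nn),
                eZMod Nn (((ε * v : ℤ) : ZMod Nn) * a p.2) *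
                (starRingEnd ℂ) (eZMod Nn (((ε * v : ℤ) : ZMod Nn) * a p'.2)) := by
              rw [Finset.mul_sum]
              exact Finset.sum_congr rfl fun v _ => by ring
          _ = (cc p.1 * (starRingEnd ℂ) (cc p'.1)) *
              (if a p.2 = a p'.2 then ((q2 * Nn : ℕ) : ℂ) else 0) := by
              rw [key_orth hNpos q2 ε hε]
          _ = (cc p.1 * (starRingEnd ℂ) (cc p'.1)) *
              (if p.2 = p'.2 then ((q2 * Nn : ℕ) : ℂ) else 0) := by
              congr 1
              by_cases h : p.2 = p'.2
              · rw [if_pos h, if_pos ((ha _ hpu _ hpu').mpr h)]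
              · rw [if_neg h, if_neg (fun hc => h ((ha _ hpu _ hpu').mp hc))]
      · simp [hc2]
    · simp [hc1]
  rw [Finset.sum_congr rfl fun p hp => Finset.sum_congr rfl fun p' hp' => hinner p hp p' hp']
  -- now collapse the product sums
  rw [Finset.mul_sum]
  rw [Finset.sum_product]
  refine Finset.sum_congr rfl fun d hd => ?_
  rw [Finset.mul_sum]
  have hcollapse : ∀ u ∈ U, ∀ d' ∈ D,
      (∑ u' ∈ U, (cc d * (starRingEnd ℂ) (cc d')) *
        (if P1 d u ∧ P2 d' u' ∧ u = u' then ((q2 * Nn : ℕ) : ℂ) else 0))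
      = (cc d * (starRingEnd ℂ) (cc d')) *
          (if P1 d u ∧ P2 d' u then ((q2 * Nn : ℕ) : ℂ) else 0) := by
    intro u hu d' hd'
    rw [← Finset.mul_sum]
    congr 1
    rw [Finset.sum_eq_single u]
    · by_cases h1 : P1 d u
      · by_cases h2 : P2 d' u
        · rw [if_pos ⟨h1, h2, rfl⟩, if_pos ⟨h1, h2⟩]
        · rw [if_neg (fun hc => h2 hc.2.1), if_neg (fun hc => h2 hc.2)]
      · rw [if_neg (fun hc => h1 hc.1), if_neg (fun hc => h1 hc.1)]
    · intro b _ hb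
      rw [if_neg]
      rintro ⟨-, -, rfl⟩
      exact hb rfl
    · intro h
      exact absurd hu h
  calc ∑ u ∈ U, ∑ p' ∈ D ×ˢ U,
        (cc d * (starRingEnd ℂ) (cc p'.1)) *
          (if P1 d u ∧ P2 p'.1 p'.2 ∧ u = p'.2 then ((q2 * Nn : ℕ) : ℂ) else 0)
      = ∑ u ∈ U, ∑ d' ∈ D, (cc d * (starRingEnd ℂ) (cc d')) *
          (if P1 d u ∧ P2 d' u then ((q2 * Nn : ℕ) : ℂ) else 0) := by
        refine Finset.sum_congr rfl fun u hu => ?_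
        rw [Finset.sum_product]
        exact Finset.sum_congr rfl fun d' hd' => hcollapse u hu d' hd'
    _ = ∑ d' ∈ D, ∑ u ∈ U, (cc d * (starRingEnd ℂ) (cc d')) *
          (if P1 d u ∧ P2 d' u then ((q2 * Nn : ℕ) : ℂ) else 0) := Finset.sum_comm
    _ = ∑ d' ∈ D, ((q2 * Nn : ℕ) : ℂ) * ((cc d * (starRingEnd ℂ) (cc d')) *
          ((U.filter (fun u => P1 d u ∧ P2 d' u)).card : ℂ)) := by
        refine Finset.sum_congr rfl fun d' _ => ?_
        rw [← Finset.mul_sum, Finset.sum_ite, Finset.sum_const, Finset.sum_const_zero, add_zero,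
          nsmul_eq_mul]
        ring

lemma zero_frequency_bound_aux :
    ∃ C : ℝ, 0 < C ∧
      ∀ (M1 M2 q1 q2 r n1 : ℕ) (m m' ε δ : ℤ),
        M1.Prime → M2.Prime → M1 ≠ M2 →
        0 < q1 → 0 < q2 → 0 < r → 0 < n1 →
        Nat.Coprime q2 (q1 * M1 * M2) →
        Nat.Coprime (q1 * r) (M1 * M2) →
        n1 ∣ q1 * r → Nat.Coprime q2 (n1 * r) →
        (ε = 1 ∨ ε = -1) → (δ = 1 ∨ δ = -1) →
        ‖((n1 : ℂ) / ((q2 : ℂ) ^ 2 * q1 * r)) *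
            ∑ v ∈ Finset.range (q2 ^ 2 * q1 * r / n1),
              (∑ d ∈ (q1*q2).divisors, (d : ℂ) * ((ArithmeticFunction.moebius ((q1*q2) / d) : ℤ) : ℂ) *
                ∑ u ∈ (Finset.range ((q1*q2) * r / n1)).filter (fun u => Nat.Coprime u ((q1*q2) * r / n1)),
                  if ((δ*m : ℤ) : ZMod d) = ((M2 ^ 2 * n1 * u : ℕ) : ZMod d)
                  then eZMod ((q1*q2) * r / n1)
                    (((ε*v : ℤ) : ZMod ((q1*q2) * r / n1)) * ((M1 : ZMod ((q1*q2) * r / n1)) * (u : ZMod ((q1*q2) * r / n1)))⁻¹)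
                  else 0) *
                (starRingEnd ℂ) (∑ d ∈ (q1*q2).divisors, (d : ℂ) * ((ArithmeticFunction.moebius ((q1*q2) / d) : ℤ) : ℂ) *
                ∑ u ∈ (Finset.range ((q1*q2) * r / n1)).filter (fun u => Nat.Coprime u ((q1*q2) * r / n1)),
                  if ((δ*m' : ℤ) : ZMod d) = ((M2 ^ 2 * n1 * u : ℕ) : ZMod d)
                  then eZMod ((q1*q2) * r / n1)
                    (((ε*v : ℤ) : ZMod ((q1*q2) * r / n1)) * ((M1 : ZMod ((q1*q2) * r / n1)) * (u : ZMod ((q1*q2) * r / n1)))⁻¹)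
                  else 0)‖
          ≤ C * ((q1 : ℝ) * q2 * r) *
              ∑ d ∈ (q1 * q2).divisors,
                ∑ d' ∈ ((q1 * q2).divisors).filter
                    (fun d' => ((Nat.gcd d d' : ℤ)) ∣ (m - m')),
                  (Nat.gcd d d' : ℝ) := by
  refine ⟨2, by norm_num, ?_⟩
  intro M1 M2 q1 q2 r n1 m m' ε δ hM1p hM2p hM1M2 hq1 hq2 hr hn1 hcop2 hcop1 hn1dvd hcop3 hε hδ
  have hq : 0 < q1 * q2 := Nat.mul_pos hq1 hq2
  have hn1dvd' : n1 ∣ q1 * q2 * r := by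
    have h : q1 * q2 * r = (q1 * r) * q2 := by ring
    rw [h]; exact hn1dvd.mul_right q2
  set Nn : ℕ := q1 * q2 * r / n1 with hNn
  have hNpos : 0 < Nn := Nat.div_pos (Nat.le_of_dvd (by positivity) hn1dvd') hn1
  have hK : q2 ^ 2 * q1 * r / n1 = q2 * Nn := by
    rw [hNn, show q2^2*q1*r = q2 * (q1*q2*r) by ring, Nat.mul_div_assoc q2 hn1dvd']
  have hn1Nn : n1 * Nn = q1 * q2 * r := Nat.mul_div_cancel' hn1dvd'
  -- coprimality facts
  have cM1M2q1r : Nat.Coprime (q1*r) M1 := hcop1.coprime_dvd_right (dvd_mul_right M1 M2)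
  have cq1M1 : Nat.Coprime q1 M1 := Nat.Coprime.coprime_dvd_left (dvd_mul_right q1 r) cM1M2q1r
  have crM1 : Nat.Coprime r M1 := Nat.Coprime.coprime_dvd_left (dvd_mul_left r q1) cM1M2q1r
  have cq2M1 : Nat.Coprime q2 M1 := hcop2.coprime_dvd_right
    (Dvd.dvd.mul_right (dvd_mul_left M1 q1) M2)
  have cqqrM1 : Nat.Coprime (q1*q2*r) M1 := by
    rw [Nat.coprime_mul_iff_left, Nat.coprime_mul_iff_left]
    exact ⟨⟨cq1M1, cq2M1⟩, crM1⟩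
  have cNnM1 : Nat.Coprime Nn M1 :=
    Nat.Coprime.coprime_dvd_left (Nat.div_dvd_of_dvd hn1dvd') cqqrM1
  have cM2q1 : Nat.Coprime M2 q1 :=
    ((hcop1.coprime_dvd_right (dvd_mul_left M2 M1)).coprime_dvd_left (dvd_mul_right q1 r)).symm
  have cM2q2 : Nat.Coprime M2 q2 :=
    (hcop2.coprime_dvd_right (dvd_mul_left M2 (q1*M1))).symm
  have cM2qq : Nat.Coprime (M2^2) (q1*q2) := by
    rw [Nat.coprime_mul_iff_right]
    exact ⟨Nat.Coprime.pow_left _ cM2q1, Nat.Coprime.pow_left _ cM2q2⟩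
  set D := (q1*q2).divisors with hD
  set U := (Finset.range Nn).filter (fun u => Nat.Coprime u Nn) with hUdef
  have hdetect : ∀ u ∈ U, ∀ u' ∈ U,
      ((M1 : ZMod Nn) * (u : ZMod Nn))⁻¹ = ((M1 : ZMod Nn) * (u' : ZMod Nn))⁻¹ ↔ u = u' := by
    intro u hu u' hu'
    obtain ⟨hur, huc⟩ := Finset.mem_filter.mp hu
    obtain ⟨hur', huc'⟩ := Finset.mem_filter.mp hu'
    constructor
    · intro h
      have hcast : ∀ w : ℕ, ((M1 * w : ℕ) : ZMod Nn) = (M1 : ZMod Nn) * (w : ZMod Nn) := by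
        intro w; push_cast; ring
      have hu1 : IsUnit ((M1 : ZMod Nn) * (u : ZMod Nn)) := by
        rw [← hcast u, ZMod.isUnit_iff_coprime]
        exact Nat.coprime_mul_iff_left.mpr ⟨cNnM1.symm, huc⟩
      have hu2 : IsUnit ((M1 : ZMod Nn) * (u' : ZMod Nn)) := by
        rw [← hcast u', ZMod.isUnit_iff_coprime]
        exact Nat.coprime_mul_iff_left.mpr ⟨cNnM1.symm, huc'⟩
      have h3 := inv_inj_of_isUnit hu1 hu2 h
      have hM1unit : IsUnit (M1 : ZMod Nn) := by
        rw [ZMod.isUnit_iff_coprime]; exact cNnM1.symm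
      have h4 : (u : ZMod Nn) = (u' : ZMod Nn) := hM1unit.mul_left_cancel h3
      have h5 := (ZMod.natCast_eq_natCast_iff' u u' Nn).mp h4
      rwa [Nat.mod_eq_of_lt (Finset.mem_range.mp hur),
        Nat.mod_eq_of_lt (Finset.mem_range.mp hur')] at h5
    · rintro rfl; rfl
  have hident : (∑ v ∈ Finset.range (q2 * Nn),
      (∑ d ∈ D, ((d : ℂ) * ((ArithmeticFunction.moebius ((q1*q2) / d) : ℤ) : ℂ)) * ∑ u ∈ U,
        if ((δ*m : ℤ) : ZMod d) = ((M2 ^ 2 * n1 * u : ℕ) : ZMod d)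
        then eZMod Nn (((ε*v : ℤ) : ZMod Nn) * ((M1 : ZMod Nn) * (u : ZMod Nn))⁻¹) else 0) *
      (starRingEnd ℂ) (∑ d ∈ D, ((d : ℂ) * ((ArithmeticFunction.moebius ((q1*q2) / d) : ℤ) : ℂ)) * ∑ u ∈ U,
        if ((δ*m' : ℤ) : ZMod d) = ((M2 ^ 2 * n1 * u : ℕ) : ZMod d)
        then eZMod Nn (((ε*v : ℤ) : ZMod Nn) * ((M1 : ZMod Nn) * (u : ZMod Nn))⁻¹) else 0))
      = ((q2 * Nn : ℕ) : ℂ) * ∑ d ∈ D, ∑ d' ∈ D,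
          ((((d : ℂ) * ((ArithmeticFunction.moebius ((q1*q2) / d) : ℤ) : ℂ))) *
            (starRingEnd ℂ) ((((d' : ℂ) * ((ArithmeticFunction.moebius ((q1*q2) / d') : ℤ) : ℂ))))) *
          ((U.filter (fun u => (((δ*m : ℤ) : ZMod d) = ((M2 ^ 2 * n1 * u : ℕ) : ZMod d)) ∧
            (((δ*m' : ℤ) : ZMod d') = ((M2 ^ 2 * n1 * u : ℕ) : ZMod d')))).card : ℂ) :=
    sum_identity hNpos q2 D U _ _ _ _ hdetect ε hε
  rw [hK, hident]
  -- remove prefactor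
  have hval : (n1 * (q2 * Nn) : ℕ) = q2 ^ 2 * q1 * r := by
    rw [show n1 * (q2 * Nn) = q2 * (n1 * Nn) by ring, hn1Nn]; ring
  have hne : ((q2:ℂ) ^ 2 * q1 * r) ≠ 0 := by
    have h1 : (q1:ℂ) ≠ 0 := Nat.cast_ne_zero.mpr hq1.ne'
    have h2 : (q2:ℂ) ≠ 0 := Nat.cast_ne_zero.mpr hq2.ne'
    have h3 : (r:ℂ) ≠ 0 := Nat.cast_ne_zero.mpr hr.ne'
    exact mul_ne_zero (mul_ne_zero (pow_ne_zero 2 h2) h1) h3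
  have hprefactor : ∀ T : ℂ, (n1 : ℂ) / ((q2 : ℂ) ^ 2 * q1 * r) * (((q2 * Nn : ℕ) : ℂ) * T) = T := by
    intro T
    have h6 : ((n1 * (q2 * Nn) : ℕ) : ℂ) = (q2:ℂ) ^ 2 * q1 * r := by
      rw [hval]; push_cast; ring
    push_cast at h6
    rw [show (n1 : ℂ) / ((q2 : ℂ) ^ 2 * q1 * r) * (((q2 * Nn : ℕ) : ℂ) * T)
      = ((n1 : ℂ) * ((q2:ℂ) * (Nn:ℂ))) / ((q2 : ℂ) ^ 2 * q1 * r) * T by push_cast; ring, h6,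
      div_self hne, one_mul]
  rw [hprefactor]
  have habs_cc : ∀ e : ℕ, ‖(e:ℂ) * ((ArithmeticFunction.moebius ((q1*q2)/e) : ℤ):ℂ)‖ ≤ (e:ℝ) := by
    intro e
    rw [norm_mul, Complex.norm_natCast, Complex.norm_intCast]
    have h1 : |(ArithmeticFunction.moebius ((q1*q2)/e) : ℤ)| ≤ 1 := abs_moebius_le _
    have h2 : |((ArithmeticFunction.moebius ((q1*q2)/e) : ℤ) : ℝ)| ≤ 1 := by exact_mod_cast h1
    calc (e:ℝ) * |((ArithmeticFunction.moebius ((q1*q2)/e) : ℤ) : ℝ)|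
        ≤ (e:ℝ) * 1 := mul_le_mul_of_nonneg_left h2 (Nat.cast_nonneg e)
      _ = e := mul_one _
  have hpair : ∀ d ∈ D, ∀ d' ∈ D, ‖(((d : ℂ) * ((ArithmeticFunction.moebius ((q1*q2) / d) : ℤ) : ℂ)) * (starRingEnd ℂ) ((d' : ℂ) * ((ArithmeticFunction.moebius ((q1*q2) / d') : ℤ) : ℂ))) * (((U.filter (fun u => (((δ*m : ℤ) : ZMod d) = ((M2 ^ 2 * n1 * u : ℕ) : ZMod d)) ∧ (((δ*m' : ℤ) : ZMod d') = ((M2 ^ 2 * n1 * u : ℕ) : ZMod d')))).card : ℕ) : ℂ)‖ ≤ (if ((Nat.gcd d d' : ℤ)) ∣ (m - m') then 2*((q1:ℝ)*q2*r)*(Nat.gcd d d' : ℝ) else 0) := by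
    intro d hd d' hd'
    have hddvd : d ∣ q1 * q2 := (Nat.mem_divisors.mp hd).1
    have hd'dvd : d' ∣ q1 * q2 := (Nat.mem_divisors.mp hd').1
    have hdpos : 0 < d := Nat.pos_of_dvd_of_pos hddvd hq
    have hd'pos : 0 < d' := Nat.pos_of_dvd_of_pos hd'dvd hq
    set F : ℕ := (U.filter (fun u => (((δ*m : ℤ) : ZMod d) = ((M2 ^ 2 * n1 * u : ℕ) : ZMod d)) ∧ (((δ*m' : ℤ) : ZMod d') = ((M2 ^ 2 * n1 * u : ℕ) : ZMod d')))).card with hF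
    have habs : ‖(((d : ℂ) * ((ArithmeticFunction.moebius ((q1*q2) / d) : ℤ) : ℂ)) * (starRingEnd ℂ) ((d' : ℂ) * ((ArithmeticFunction.moebius ((q1*q2) / d') : ℤ) : ℂ))) * (((U.filter (fun u => (((δ*m : ℤ) : ZMod d) = ((M2 ^ 2 * n1 * u : ℕ) : ZMod d)) ∧ (((δ*m' : ℤ) : ZMod d') = ((M2 ^ 2 * n1 * u : ℕ) : ZMod d')))).card : ℕ) : ℂ)‖ ≤ (d:ℝ) * (d':ℝ) * (F:ℝ) := by
      calc ‖(((d : ℂ) * ((ArithmeticFunction.moebius ((q1*q2) / d) : ℤ) : ℂ)) * (starRingEnd ℂ) ((d' : ℂ) * ((ArithmeticFunction.moebius ((q1*q2) / d') : ℤ) : ℂ))) * (((U.filter (fun u => (((δ*m : ℤ) : ZMod d) = ((M2 ^ 2 * n1 * u : ℕ) : ZMod d)) ∧ (((δ*m' : ℤ) : ZMod d') = ((M2 ^ 2 * n1 * u : ℕ) : ZMod d')))).card : ℕ) : ℂ)‖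
          = ‖(d : ℂ) * ((ArithmeticFunction.moebius ((q1*q2) / d) : ℤ) : ℂ)‖ * ‖(d' : ℂ) * ((ArithmeticFunction.moebius ((q1*q2) / d') : ℤ) : ℂ)‖ * (F:ℝ) := by
            rw [norm_mul, norm_mul, Complex.norm_conj, Complex.norm_natCast]
        _ ≤ (d:ℝ) * (d':ℝ) * (F:ℝ) := by
            have g1 := habs_cc d
            have g2 := habs_cc d'
            have g3 : (0:ℝ) ≤ F := Nat.cast_nonneg F
            have g5 := norm_nonneg ((d' : ℂ) * ((ArithmeticFunction.moebius ((q1*q2) / d') : ℤ) : ℂ))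
            exact mul_le_mul_of_nonneg_right (mul_le_mul g1 g2 g5 (Nat.cast_nonneg d)) g3
    by_cases hF0 : F = 0
    · rw [hF0] at habs
      simp only [Nat.cast_zero, mul_zero] at habs
      refine le_trans habs ?_
      split
      · positivity
      · exact le_refl 0
    · -- F > 0 : get an element and the divisibility of gcd
      obtain ⟨u0, hu0⟩ := Finset.card_pos.mp (Nat.pos_of_ne_zero hF0)
      obtain ⟨hu0U, h01, h02⟩ := Finset.mem_filter.mp hu0
      have hgdvd : ((Nat.gcd d d' : ℤ)) ∣ (m - m') := by
        have h1g : ((δ*m : ℤ) : ZMod (Nat.gcd d d')) = ((M2 ^ 2 * n1 * u0 : ℕ) : ZMod (Nat.gcd d d')) := by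
          have h := congrArg (ZMod.castHom (Nat.gcd_dvd_left d d') (ZMod (Nat.gcd d d'))) h01
          rwa [map_intCast, map_natCast] at h
        have h2g : ((δ*m' : ℤ) : ZMod (Nat.gcd d d')) = ((M2 ^ 2 * n1 * u0 : ℕ) : ZMod (Nat.gcd d d')) := by
          have h := congrArg (ZMod.castHom (Nat.gcd_dvd_right d d') (ZMod (Nat.gcd d d'))) h02
          rwa [map_intCast, map_natCast] at h
        have heq2 : ((δ*m : ℤ) : ZMod (Nat.gcd d d')) = ((δ*m' : ℤ) : ZMod (Nat.gcd d d')) :=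
          h1g.trans h2g.symm
        have hdvd : ((Nat.gcd d d' : ℤ)) ∣ (δ*m - δ*m') := by
          rwa [← ZMod.intCast_zmod_eq_zero_iff_dvd, Int.cast_sub, sub_eq_zero]
        rcases hδ with rfl | rfl
        · simpa using hdvd
        · rw [show (-1:ℤ)*m - (-1)*m' = -(m - m') by ring] at hdvd
          exact dvd_neg.mp hdvd
      -- bound F
      set L : ℕ := Nat.lcm (d / Nat.gcd d n1) (d' / Nat.gcd d' n1) with hL
      have hLpos : 0 < L := Nat.lcm_pos
        (Nat.div_pos (Nat.le_of_dvd hdpos (Nat.gcd_dvd_left d n1)) (Nat.gcd_pos_of_pos_right d hn1))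
        (Nat.div_pos (Nat.le_of_dvd hd'pos (Nat.gcd_dvd_left d' n1)) (Nat.gcd_pos_of_pos_right d' hn1))
      have hsubset : (U.filter (fun u => (((δ*m : ℤ) : ZMod d) = ((M2 ^ 2 * n1 * u : ℕ) : ZMod d)) ∧ (((δ*m' : ℤ) : ZMod d') = ((M2 ^ 2 * n1 * u : ℕ) : ZMod d')))) ⊆ Finset.range Nn :=
        (Finset.filter_subset _ _).trans (by rw [hUdef]; exact Finset.filter_subset _ _)
      have hstep : ∀ u ∈ (U.filter (fun u => (((δ*m : ℤ) : ZMod d) = ((M2 ^ 2 * n1 * u : ℕ) : ZMod d)) ∧ (((δ*m' : ℤ) : ZMod d') = ((M2 ^ 2 * n1 * u : ℕ) : ZMod d')))), ∀ u' ∈ (U.filter (fun u => (((δ*m : ℤ) : ZMod d) = ((M2 ^ 2 * n1 * u : ℕ) : ZMod d)) ∧ (((δ*m' : ℤ) : ZMod d') = ((M2 ^ 2 * n1 * u : ℕ) : ZMod d')))), u ≤ u' → L ∣ u' - u := by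
        intro u hu u' hu' hle
        obtain ⟨-, hu1, hu2⟩ := Finset.mem_filter.mp hu
        obtain ⟨-, hu1', hu2'⟩ := Finset.mem_filter.mp hu'
        have key : ∀ (e : ℕ), e ∣ q1 * q2 →
            ((M2 ^ 2 * n1 * u : ℕ) : ZMod e) = ((M2 ^ 2 * n1 * u' : ℕ) : ZMod e) →
            e / Nat.gcd e n1 ∣ u' - u := by
          intro e hedvd hcasteq
          have hmod : M2 ^ 2 * (n1 * u) ≡ M2 ^ 2 * (n1 * u') [MOD e] := by
            have := (ZMod.natCast_eq_natCast_iff _ _ _).mp hcasteq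
            rwa [mul_assoc, mul_assoc] at this
          have hcop : Nat.gcd e (M2 ^ 2) = 1 := (cM2qq.coprime_dvd_right hedvd).symm
          have hmod2 : n1 * u ≡ n1 * u' [MOD e] := hmod.cancel_left_of_coprime hcop
          have hdvd2 : e ∣ n1 * u' - n1 * u :=
            (Nat.modEq_iff_dvd' (Nat.mul_le_mul_left n1 hle)).mp hmod2
          rw [← Nat.mul_sub] at hdvd2
          exact div_gcd_dvd_of_dvd_mul hn1 hdvd2
        exact Nat.lcm_dvd (key d hddvd (hu1.symm.trans hu1')) (key d' hd'dvd (hu2.symm.trans hu2'))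
      have hFle : F ≤ Nn / L + 1 := card_le_of_dvd_diff hLpos _ hsubset hstep
      rw [hNn] at hFle
      have hNat : d * d' * F ≤ 2 * (q1 * q2 * r) * Nat.gcd d d' :=
        pair_count_bound q1 q2 r n1 d d' F hq hr hn1 hn1dvd' hddvd hd'dvd hFle
      rw [if_pos hgdvd]
      refine le_trans habs ?_
      have : ((d * d' * F : ℕ) : ℝ) ≤ ((2 * (q1 * q2 * r) * Nat.gcd d d' : ℕ) : ℝ) := Nat.cast_le.mpr hNat
      push_cast at this
      calc (d:ℝ) * (d':ℝ) * (F:ℝ) ≤ 2*((q1:ℝ)*(q2:ℝ)*(r:ℝ))*(Nat.gcd d d' : ℝ) := by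
            nlinarith
        _ = 2*((q1:ℝ)*q2*r)*(Nat.gcd d d' : ℝ) := by norm_num
  calc ‖∑ d ∈ D, ∑ d' ∈ D, (((d : ℂ) * ((ArithmeticFunction.moebius ((q1*q2) / d) : ℤ) : ℂ)) * (starRingEnd ℂ) ((d' : ℂ) * ((ArithmeticFunction.moebius ((q1*q2) / d') : ℤ) : ℂ))) * (((U.filter (fun u => (((δ*m : ℤ) : ZMod d) = ((M2 ^ 2 * n1 * u : ℕ) : ZMod d)) ∧ (((δ*m' : ℤ) : ZMod d') = ((M2 ^ 2 * n1 * u : ℕ) : ZMod d')))).card : ℕ) : ℂ)‖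
      ≤ ∑ d ∈ D, ‖∑ d' ∈ D, (((d : ℂ) * ((ArithmeticFunction.moebius ((q1*q2) / d) : ℤ) : ℂ)) * (starRingEnd ℂ) ((d' : ℂ) * ((ArithmeticFunction.moebius ((q1*q2) / d') : ℤ) : ℂ))) * (((U.filter (fun u => (((δ*m : ℤ) : ZMod d) = ((M2 ^ 2 * n1 * u : ℕ) : ZMod d)) ∧ (((δ*m' : ℤ) : ZMod d') = ((M2 ^ 2 * n1 * u : ℕ) : ZMod d')))).card : ℕ) : ℂ)‖ := norm_sum_le _ _
    _ ≤ ∑ d ∈ D, ∑ d' ∈ D, ‖(((d : ℂ) * ((ArithmeticFunction.moebius ((q1*q2) / d) : ℤ) : ℂ)) * (starRingEnd ℂ) ((d' : ℂ) * ((ArithmeticFunction.moebius ((q1*q2) / d') : ℤ) : ℂ))) * (((U.filter (fun u => (((δ*m : ℤ) : ZMod d) = ((M2 ^ 2 * n1 * u : ℕ) : ZMod d)) ∧ (((δ*m' : ℤ) : ZMod d') = ((M2 ^ 2 * n1 * u : ℕ) : ZMod d')))).card : ℕ) : ℂ)‖ :=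
        Finset.sum_le_sum fun d _ => norm_sum_le _ _
    _ ≤ ∑ d ∈ D, ∑ d' ∈ D, (if ((Nat.gcd d d' : ℤ)) ∣ (m - m') then 2*((q1:ℝ)*q2*r)*(Nat.gcd d d' : ℝ) else 0) :=
        Finset.sum_le_sum fun d hd => Finset.sum_le_sum fun d' hd' => hpair d hd d' hd'
    _ = ∑ d ∈ D, ∑ d' ∈ D.filter (fun d' => ((Nat.gcd d d' : ℤ)) ∣ (m - m')),
          2*((q1:ℝ)*q2*r)*(Nat.gcd d d' : ℝ) :=
        Finset.sum_congr rfl fun d _ => (Finset.sum_filter _ _).symm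
    _ = 2 * ((q1:ℝ)*q2*r) * ∑ d ∈ D, ∑ d' ∈ D.filter (fun d' => ((Nat.gcd d d' : ℤ)) ∣ (m - m')),
          (Nat.gcd d d' : ℝ) := by
        rw [Finset.mul_sum]
        exact Finset.sum_congr rfl fun d _ => (Finset.mul_sum _ _ _).symm


/-- bound for the zero-frequency character sum `𝒞2(0)`. -/
theorem zero_frequency_bound :
    ∃ C : ℝ, 0 < C ∧
      ∀ (M1 M2 q1 q2 r n1 : ℕ) (m m' ε δ : ℤ),
        M1.Prime → M2.Prime → M1 ≠ M2 →
        0 < q1 → 0 < q2 → 0 < r → 0 < n1 →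
        Nat.Coprime q2 (q1 * M1 * M2) →
        Nat.Coprime (q1 * r) (M1 * M2) →
        n1 ∣ q1 * r → Nat.Coprime q2 (n1 * r) →
        (ε = 1 ∨ ε = -1) → (δ = 1 ∨ δ = -1) →
        ‖((n1 : ℂ) / ((q2 : ℂ) ^ 2 * q1 * r)) *
            ∑ v ∈ Finset.range (q2 ^ 2 * q1 * r / n1),
              frakB r M1 M2 n1 (ε * v) (δ * m) (q1 * q2) *
                (starRingEnd ℂ) (frakB r M1 M2 n1 (ε * v) (δ * m') (q1 * q2))‖
          ≤ C * ((q1 : ℝ) * q2 * r) *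
              ∑ d ∈ (q1 * q2).divisors,
                ∑ d' ∈ ((q1 * q2).divisors).filter
                    (fun d' => ((Nat.gcd d d' : ℤ)) ∣ (m - m')),
                  (Nat.gcd d d' : ℝ) := by
  obtain ⟨C, hC, h⟩ := zero_frequency_bound_aux
  refine ⟨C, hC, ?_⟩
  intro M1 M2 q1 q2 r n1 m m' ε δ h1 h2 h3 h4 h5 h6 h7 h8 h9 h10 h11 h12 h13
  have := h M1 M2 q1 q2 r n1 m m' ε δ h1 h2 h3 h4 h5 h6 h7 h8 h9 h10 h11 h12 h13
  simp only [frakB]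
  exact this
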